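/- Let V be a real symmetric positive-definite 2n×2n matrix satisfying the uncertainty relation V + iΩ ≥ 0 (equivalently, V admits a symplectic diagonalization V = S D Sᵀ with D = diag(d₁,d₁,…,dₙ,dₙ) and all dᵢ ≥ 1). Then V⁻¹ ≤ Ω V Ωᵀ as positive semidefinite matrices, and consequently ‖V⁻¹‖ ≤ ‖V‖ for any orthogonally invariant norm. -/

import Mathlib

open Matrix

def stdSymplecticForm (n : ℕ) : Matrix (Fin (2*n)) (Fin (2*n)) ℝ :=
  Matrix.of fun i j =>
    if (i : ℕ) % 2 = 0 ∧ (j : ℕ) = (i : ℕ) + 1 then 1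
    else if (j : ℕ) % 2 = 0 ∧ (i : ℕ) = (j : ℕ) + 1 then -1
    else 0

namespace CovAux

def ptv (i : ℕ) : ℕ := if i % 2 = 0 then i + 1 else i - 1

noncomputable def epsv (i : ℕ) : ℝ := if i % 2 = 0 then 1 else -1

def partnerFin {n : ℕ} (i : Fin (2*n)) : Fin (2*n) :=
  ⟨ptv i, by have := i.isLt; simp only [ptv]; split <;> omega⟩

lemma stdSymp_apply {n : ℕ} (i j : Fin (2*n)) :
    stdSymplecticForm n i j = if j = partnerFin i then epsv (i : ℕ) else 0 := by
  have hi := i.isLt; have hj := j.isLt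
  simp only [stdSymplecticForm, of_apply, epsv, Fin.ext_iff, partnerFin, ptv]
  split_ifs <;> first | rfl | (exfalso; omega)

lemma partnerFin_inj {n : ℕ} {i j : Fin (2*n)} (h : partnerFin i = partnerFin j) : i = j := by
  have hi := i.isLt; have hj := j.isLt
  have hv : ptv (i : ℕ) = ptv (j : ℕ) := congrArg Fin.val h
  simp only [ptv] at hv
  apply Fin.ext
  split_ifs at hv <;> omega

lemma stdSymp_mul_transpose {n : ℕ} :
    stdSymplecticForm n * (stdSymplecticForm n)ᵀ = 1 := by
  ext i j
  rw [mul_apply, one_apply]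
  simp only [transpose_apply, stdSymp_apply]
  rw [Finset.sum_eq_single (partnerFin i)]
  · by_cases hij : i = j
    · subst hij
      rw [if_pos rfl, if_pos rfl]
      simp only [epsv]; split <;> norm_num
    · rw [if_neg hij, if_pos rfl, if_neg (fun h : partnerFin i = partnerFin j => hij (partnerFin_inj h)), mul_zero]
  · intro k _ hk
    rw [if_neg hk, zero_mul]
  · intro h; exact absurd (Finset.mem_univ _) h

lemma stdSymp_transpose_mul {n : ℕ} :
    (stdSymplecticForm n)ᵀ * stdSymplecticForm n = 1 :=
  mul_eq_one_comm.mp stdSymp_mul_transpose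

lemma stdSymp_mul_diagonal {n : ℕ} (e : Fin (2*n) → ℝ)
    (he : ∀ i j : Fin (2*n), (i : ℕ)/2 = (j : ℕ)/2 → e i = e j) :
    stdSymplecticForm n * diagonal e = diagonal e * stdSymplecticForm n := by
  ext i j
  rw [mul_diagonal, diagonal_mul, stdSymp_apply]
  by_cases hj : j = partnerFin i
  · rw [if_pos hj]
    have : e j = e i := by
      apply he
      have hi := i.isLt
      rw [hj]
      show ptv (i:ℕ) / 2 = (i:ℕ)/2
      simp only [ptv]; split <;> omega
    rw [this, mul_comm]
  · rw [if_neg hj, mul_zero, zero_mul]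







variable {m : Type*} [Fintype m] [DecidableEq m]

/-- sign matrix at `a` -/
noncomputable def sgn (a : m) : m → ℝ := Function.update (fun _ => (1:ℝ)) a (-1)

lemma sgn_orth (a : m) : diagonal (sgn a) * (diagonal (sgn a))ᵀ = 1 := by
  rw [diagonal_transpose, diagonal_mul_diagonal]
  have hfun : (fun i => sgn a i * sgn a i) = fun _ : m => (1:ℝ) := by
    funext i
    rcases eq_or_ne i a with h | h
    · subst h; simp [sgn]
    · simp [sgn, Function.update_of_ne h]
  rw [hfun, diagonal_one]

lemma N_mul_diagonal_le (N : Matrix m m ℝ → ℝ)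
    (ax1 : ∀ A B, N (A + B) ≤ N A + N B)
    (ax2 : ∀ (c : ℝ) A, N (c • A) = |c| * N A)
    (ax3 : ∀ (U W A : Matrix m m ℝ), U * Uᵀ = 1 → W * Wᵀ = 1 → N (U * A * W) = N A)
    (X : Matrix m m ℝ) (t : m → ℝ) (ht : ∀ i, |t i| ≤ 1) :
    N (X * diagonal t) ≤ N X := by
  suffices H : ∀ s : Finset m, ∀ t : m → ℝ, (∀ i, |t i| ≤ 1) → (∀ i ∉ s, t i = 1) →
      N (X * diagonal t) ≤ N X by
    exact H Finset.univ t ht (by simp)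
  intro s
  induction s using Finset.induction_on with
  | empty =>
    intro t ht h1
    have ht1 : t = fun _ => 1 := funext fun i => h1 i (by simp)
    rw [ht1]
    simp only [diagonal_one, mul_one]
    exact le_refl _
  | insert a s ha ih =>
    intro t ht h1
    set c := t a with hc
    have hc1 : |c| ≤ 1 := ht a
    set t1 := Function.update t a 1 with ht1def
    set t2 := Function.update t a (-1) with ht2def
    have ht1b : ∀ i, |t1 i| ≤ 1 := by
      intro i; by_cases h : i = a <;> simp [ht1def, h, ht i]
    have key1 : N (X * diagonal t1) ≤ N X := by
      apply ih t1 ht1b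
      intro i hi
      by_cases h : i = a
      · simp [ht1def, h]
      · rw [ht1def]; rw [Function.update_of_ne h]
        exact h1 i (by simp [h, hi])
    have hJ : diagonal t2 = diagonal t1 * diagonal (sgn a) := by
      rw [diagonal_mul_diagonal]
      have hfun : t2 = fun i => t1 i * sgn a i := by
        funext i
        rcases eq_or_ne i a with h | h
        · subst h; simp [ht1def, ht2def, sgn]
        · simp [ht1def, ht2def, sgn, Function.update_of_ne h]
      rw [hfun]
    have key2 : N (X * diagonal t2) ≤ N X := by
      have h3 := ax3 1 (diagonal (sgn a)) (X * diagonal t1) (by simp) (sgn_orth a)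
      rw [one_mul, mul_assoc, ← hJ] at h3
      rw [h3]; exact key1
    have hdec : X * diagonal t
        = ((1+c)/2) • (X * diagonal t1) + ((1-c)/2) • (X * diagonal t2) := by
      have hdt : diagonal t = ((1+c)/2) • diagonal t1 + ((1-c)/2) • diagonal t2 := by
        ext i j
        by_cases hij : i = j
        · subst hij
          by_cases h : i = a
          · subst h
            simp [diagonal_apply_eq, Matrix.add_apply, Matrix.smul_apply, smul_eq_mul,
              ht1def, ht2def]
            ring
          · simp [diagonal_apply_eq, Matrix.add_apply, Matrix.smul_apply, smul_eq_mul,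
              ht1def, ht2def, Function.update_of_ne h]
            ring
        · simp [diagonal_apply_ne _ hij, Matrix.add_apply, Matrix.smul_apply]
      rw [hdt, mul_add, mul_smul_comm, mul_smul_comm]
    have hcp : (0:ℝ) ≤ (1+c)/2 := by cases abs_le.mp hc1; linarith
    have hcm : (0:ℝ) ≤ (1-c)/2 := by cases abs_le.mp hc1; linarith
    calc N (X * diagonal t)
        ≤ N (((1+c)/2) • (X * diagonal t1)) + N (((1-c)/2) • (X * diagonal t2)) := by
          rw [hdec]; exact ax1 _ _
      _ = ((1+c)/2) * N (X * diagonal t1) + ((1-c)/2) * N (X * diagonal t2) := by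
          rw [ax2, ax2, abs_of_nonneg hcp, abs_of_nonneg hcm]
      _ ≤ ((1+c)/2) * N X + ((1-c)/2) * N X := by
          exact add_le_add (mul_le_mul_of_nonneg_left key1 hcp) (mul_le_mul_of_nonneg_left key2 hcm)
      _ = N X := by ring

lemma N_diagonal_mul_le (N : Matrix m m ℝ → ℝ)
    (ax1 : ∀ A B, N (A + B) ≤ N A + N B)
    (ax2 : ∀ (c : ℝ) A, N (c • A) = |c| * N A)
    (ax3 : ∀ (U W A : Matrix m m ℝ), U * Uᵀ = 1 → W * Wᵀ = 1 → N (U * A * W) = N A)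
    (X : Matrix m m ℝ) (t : m → ℝ) (ht : ∀ i, |t i| ≤ 1) :
    N (diagonal t * X) ≤ N X := by
  suffices H : ∀ s : Finset m, ∀ t : m → ℝ, (∀ i, |t i| ≤ 1) → (∀ i ∉ s, t i = 1) →
      N (diagonal t * X) ≤ N X by
    exact H Finset.univ t ht (by simp)
  intro s
  induction s using Finset.induction_on with
  | empty =>
    intro t ht h1
    have ht1 : t = fun _ => 1 := funext fun i => h1 i (by simp)
    rw [ht1]
    simp only [diagonal_one, one_mul]
    exact le_refl _
  | insert a s ha ih =>
    intro t ht h1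
    set c := t a with hc
    have hc1 : |c| ≤ 1 := ht a
    set t1 := Function.update t a 1 with ht1def
    set t2 := Function.update t a (-1) with ht2def
    have ht1b : ∀ i, |t1 i| ≤ 1 := by
      intro i; by_cases h : i = a <;> simp [ht1def, h, ht i]
    have key1 : N (diagonal t1 * X) ≤ N X := by
      apply ih t1 ht1b
      intro i hi
      by_cases h : i = a
      · simp [ht1def, h]
      · rw [ht1def]; rw [Function.update_of_ne h]
        exact h1 i (by simp [h, hi])
    have hJ : diagonal t2 = diagonal (sgn a) * diagonal t1 := by
      rw [diagonal_mul_diagonal]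
      have hfun : t2 = fun i => sgn a i * t1 i := by
        funext i
        rcases eq_or_ne i a with h | h
        · subst h; simp [ht1def, ht2def, sgn]
        · simp [ht1def, ht2def, sgn, Function.update_of_ne h]
      rw [hfun]
    have key2 : N (diagonal t2 * X) ≤ N X := by
      have h3 := ax3 (diagonal (sgn a)) 1 (diagonal t1 * X) (sgn_orth a) (by simp)
      rw [mul_one, ← mul_assoc, ← hJ] at h3
      rw [h3]; exact key1
    have hdec : diagonal t * X
        = ((1+c)/2) • (diagonal t1 * X) + ((1-c)/2) • (diagonal t2 * X) := by
      have hdt : diagonal t = ((1+c)/2) • diagonal t1 + ((1-c)/2) • diagonal t2 := by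
        ext i j
        by_cases hij : i = j
        · subst hij
          by_cases h : i = a
          · subst h
            simp [diagonal_apply_eq, Matrix.add_apply, Matrix.smul_apply, smul_eq_mul,
              ht1def, ht2def]
            ring
          · simp [diagonal_apply_eq, Matrix.add_apply, Matrix.smul_apply, smul_eq_mul,
              ht1def, ht2def, Function.update_of_ne h]
            ring
        · simp [diagonal_apply_ne _ hij, Matrix.add_apply, Matrix.smul_apply]
      rw [hdt, add_mul, smul_mul_assoc, smul_mul_assoc]
    have hcp : (0:ℝ) ≤ (1+c)/2 := by cases abs_le.mp hc1; linarith
    have hcm : (0:ℝ) ≤ (1-c)/2 := by cases abs_le.mp hc1; linarith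
    calc N (diagonal t * X)
        ≤ N (((1+c)/2) • (diagonal t1 * X)) + N (((1-c)/2) • (diagonal t2 * X)) := by
          rw [hdec]; exact ax1 _ _
      _ = ((1+c)/2) * N (diagonal t1 * X) + ((1-c)/2) * N (diagonal t2 * X) := by
          rw [ax2, ax2, abs_of_nonneg hcp, abs_of_nonneg hcm]
      _ ≤ ((1+c)/2) * N X + ((1-c)/2) * N X := by
          exact add_le_add (mul_le_mul_of_nonneg_left key1 hcp) (mul_le_mul_of_nonneg_left key2 hcm)
      _ = N X := by ring









lemma posDef_conj {A : Matrix m m ℝ} (hA : A.PosDef) {B : Matrix m m ℝ} (hB : IsUnit B) :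
    (Bᵀ * A * B).PosDef := by
  have hBv : Function.Injective B.mulVec := mulVec_injective_iff_isUnit.mpr hB
  refine PosDef.of_dotProduct_mulVec_pos ?_ fun x hx => ?_
  · have := isHermitian_conjTranspose_mul_mul B hA.1
    rwa [conjTranspose_eq_transpose_of_trivial] at this
  · have h0 : B *ᵥ x ≠ 0 := fun h => hx (hBv (by simpa using h))
    have hp := hA.dotProduct_mulVec_pos h0
    rw [show Bᵀ = Bᴴ from (conjTranspose_eq_transpose_of_trivial B).symm]
    simpa only [star_mulVec, dotProduct_mulVec, vecMul_vecMul] using hp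

lemma posDef_sqrt_exists {M : Matrix m m ℝ} (hM : M.PosDef) :
    ∃ R R' : Matrix m m ℝ, Rᵀ = R ∧ R'ᵀ = R' ∧ R * R = M ∧ R * R' = 1 ∧ R' * R = 1 := by
  set Q : Matrix m m ℝ := (hM.1.eigenvectorUnitary : Matrix m m ℝ) with hQdef
  set μ := hM.1.eigenvalues with hμdef
  have hμpos : ∀ i, 0 < μ i := hM.eigenvalues_pos
  have hQ1 : Q * Qᵀ = 1 := by
    have := mem_unitaryGroup_iff.mp hM.1.eigenvectorUnitary.2
    rwa [star_eq_conjTranspose, conjTranspose_eq_transpose_of_trivial] at this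
  have hQ2 : Qᵀ * Q = 1 := by
    have := mem_unitaryGroup_iff'.mp hM.1.eigenvectorUnitary.2
    rwa [star_eq_conjTranspose, conjTranspose_eq_transpose_of_trivial] at this
  have hspec : M = Q * diagonal μ * Qᵀ := by
    have h := hM.1.spectral_theorem
    rwa [Unitary.conjStarAlgAut_apply, star_eq_conjTranspose, conjTranspose_eq_transpose_of_trivial,
      show (RCLike.ofReal ∘ μ : m → ℝ) = μ by funext i; simp] at h
  have cancel : ∀ X : Matrix m m ℝ, Qᵀ * (Q * X) = X := fun X => by
    rw [← mul_assoc, hQ2, one_mul]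
  have key : ∀ e f : m → ℝ,
      (Q * diagonal e * Qᵀ) * (Q * diagonal f * Qᵀ) = Q * (diagonal e * diagonal f) * Qᵀ := by
    intro e f
    simp only [mul_assoc]
    rw [cancel]
  have symx : ∀ e : m → ℝ, (Q * diagonal e * Qᵀ)ᵀ = Q * diagonal e * Qᵀ := by
    intro e
    rw [transpose_mul, transpose_mul, transpose_transpose, diagonal_transpose, ← mul_assoc]
  refine ⟨Q * diagonal (fun i => Real.sqrt (μ i)) * Qᵀ,
          Q * diagonal (fun i => (Real.sqrt (μ i))⁻¹) * Qᵀ, symx _, symx _, ?_, ?_, ?_⟩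
  · rw [key, diagonal_mul_diagonal,
      show (fun i => Real.sqrt (μ i) * Real.sqrt (μ i)) = μ from
        funext fun i => Real.mul_self_sqrt (hμpos i).le, hspec]
  · rw [key, diagonal_mul_diagonal,
      show (fun i => Real.sqrt (μ i) * (Real.sqrt (μ i))⁻¹) = fun _ => (1:ℝ) from
        funext fun i => mul_inv_cancel₀ (Real.sqrt_pos.mpr (hμpos i)).ne', diagonal_one,
      mul_one, hQ1]
  · rw [key, diagonal_mul_diagonal,
      show (fun i => (Real.sqrt (μ i))⁻¹ * Real.sqrt (μ i)) = fun _ => (1:ℝ) from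
        funext fun i => inv_mul_cancel₀ (Real.sqrt_pos.mpr (hμpos i)).ne', diagonal_one,
      mul_one, hQ1]

lemma N_mul_transpose_comm (N : Matrix m m ℝ → ℝ)
    (ax3 : ∀ (U W A : Matrix m m ℝ), U * Uᵀ = 1 → W * Wᵀ = 1 → N (U * A * W) = N A)
    {M M' : Matrix m m ℝ} (h1 : M * M' = 1) :
    N (M * Mᵀ) = N (Mᵀ * M) := by
  have hMu : IsUnit M := ⟨⟨M, M', h1, mul_eq_one_comm.mp h1⟩, rfl⟩
  have hpd : (Mᵀ * M).PosDef := by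
    have := posDef_conj Matrix.PosDef.one hMu
    rwa [mul_one] at this
  obtain ⟨T, T', hTsym, hT'sym, hTT, hTT', hT'T⟩ := posDef_sqrt_exists hpd
  set O := M * T' with hO
  have hOTO : Oᵀ * O = 1 := by
    rw [hO, transpose_mul, hT'sym]
    calc T' * Mᵀ * (M * T') = T' * ((Mᵀ * M) * T') := by simp only [mul_assoc]
      _ = T' * ((T * T) * T') := by rw [← hTT]
      _ = (T' * T) * (T * T') := by simp only [mul_assoc]
      _ = 1 := by rw [hT'T, hTT', one_mul]
  have hOT : O * Oᵀ = 1 := mul_eq_one_comm.mp hOTO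
  have hid : O * (Mᵀ * M) * Oᵀ = M * Mᵀ := by
    rw [hO, transpose_mul, hT'sym, ← hTT]
    calc M * T' * (T * T) * (T' * Mᵀ) = M * ((T' * T) * ((T * T') * Mᵀ)) := by
          simp only [mul_assoc]
      _ = M * Mᵀ := by rw [hT'T, hTT', one_mul, one_mul]
  rw [← hid, ax3 O Oᵀ _ hOT (by rw [transpose_transpose]; exact hOTO)]

lemma norm_mono {A B : Matrix m m ℝ} (hA : A.PosDef) (hB : B.PosDef)
    (hBA : (B - A).PosSemidef) (N : Matrix m m ℝ → ℝ)
    (ax1 : ∀ A B, N (A + B) ≤ N A + N B)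
    (ax2 : ∀ (c : ℝ) A, N (c • A) = |c| * N A)
    (ax3 : ∀ (U W A : Matrix m m ℝ), U * Uᵀ = 1 → W * Wᵀ = 1 → N (U * A * W) = N A) :
    N A ≤ N B := by
  obtain ⟨R, R', hRsym, hR'sym, hRR, hRR', hR'R⟩ := posDef_sqrt_exists hB
  have hR'u : IsUnit R' := ⟨⟨R', R, hR'R, hRR'⟩, rfl⟩
  set G := R' * A * R' with hGdef
  have hGpd : G.PosDef := by
    have := posDef_conj hA hR'u
    rwa [hR'sym] at this
  set Q : Matrix m m ℝ := (hGpd.1.eigenvectorUnitary : Matrix m m ℝ) with hQdef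
  set γ := hGpd.1.eigenvalues with hγdef
  have hγpos : ∀ i, 0 < γ i := hGpd.eigenvalues_pos
  have hQ1 : Q * Qᵀ = 1 := by
    have := mem_unitaryGroup_iff.mp hGpd.1.eigenvectorUnitary.2
    rwa [star_eq_conjTranspose, conjTranspose_eq_transpose_of_trivial] at this
  have hQ2 : Qᵀ * Q = 1 := by
    have := mem_unitaryGroup_iff'.mp hGpd.1.eigenvectorUnitary.2
    rwa [star_eq_conjTranspose, conjTranspose_eq_transpose_of_trivial] at this
  have hGspec : G = Q * diagonal γ * Qᵀ := by
    have h := hGpd.1.spectral_theorem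
    rwa [Unitary.conjStarAlgAut_apply, star_eq_conjTranspose, conjTranspose_eq_transpose_of_trivial,
      show (RCLike.ofReal ∘ γ : m → ℝ) = γ by funext i; simp] at h
  have hdiagγ : Qᵀ * G * Q = diagonal γ := by
    have h := hGpd.1.conjStarAlgAut_star_eigenvectorUnitary
    rwa [Unitary.conjStarAlgAut_star_apply, star_eq_conjTranspose, conjTranspose_eq_transpose_of_trivial,
      show (RCLike.ofReal ∘ γ : m → ℝ) = γ by funext i; simp] at h
  -- γ i ≤ 1
  have hRBR : R' * B * R' = 1 := by
    calc R' * B * R' = R' * (R * R) * R' := by rw [hRR]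
      _ = (R' * R) * (R * R') := by simp only [mul_assoc]
      _ = 1 := by rw [hR'R, hRR', one_mul]
  have hsub : (diagonal (fun i => 1 - γ i)).PosSemidef := by
    have hpsd1 : (R' * (B - A) * R'ᴴ).PosSemidef := hBA.mul_mul_conjTranspose_same R'
    rw [conjTranspose_eq_transpose_of_trivial, hR'sym] at hpsd1
    have hpsd2 : (Qᴴ * (R' * (B - A) * R') * Q).PosSemidef :=
      hpsd1.conjTranspose_mul_mul_same Q
    rw [conjTranspose_eq_transpose_of_trivial] at hpsd2
    have heq : Qᵀ * (R' * (B - A) * R') * Q = diagonal (fun i => 1 - γ i) := by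
      have h1 : R' * (B - A) * R' = 1 - G := by
        rw [Matrix.mul_sub, Matrix.sub_mul, hGdef, hRBR]
      rw [h1, Matrix.mul_sub, mul_one, Matrix.sub_mul, hQ2, hdiagγ]
      ext i j
      by_cases hij : i = j
      · subst hij; simp [diagonal_apply_eq]
      · simp [diagonal_apply_ne _ hij, one_apply_ne hij]
    rwa [heq] at hpsd2
  have hγle : ∀ i, γ i ≤ 1 := by
    intro i
    have := posSemidef_diagonal_iff.mp hsub i
    linarith
  set p := fun i => Real.sqrt (γ i) with hpdef
  have hppos : ∀ i, 0 < p i := fun i => Real.sqrt_pos.mpr (hγpos i)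
  have hpabs : ∀ i, |p i| ≤ 1 := fun i => by
    rw [abs_of_nonneg (hppos i).le]; exact Real.sqrt_le_one.mpr (hγle i)
  have hpp : diagonal p * diagonal p = diagonal γ := by
    rw [diagonal_mul_diagonal,
      show (fun i => p i * p i) = γ from funext fun i => Real.mul_self_sqrt (hγpos i).le]
  set M := R * Q * diagonal p with hM
  set M' := diagonal (fun i => (p i)⁻¹) * Qᵀ * R' with hM'
  have hMt : Mᵀ = diagonal p * (Qᵀ * R) := by
    rw [hM, transpose_mul, transpose_mul, diagonal_transpose, hRsym]
  have hMM' : M * M' = 1 := by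
    rw [hM, hM']
    calc R * Q * diagonal p * (diagonal (fun i => (p i)⁻¹) * Qᵀ * R')
        = R * (Q * ((diagonal p * diagonal (fun i => (p i)⁻¹)) * (Qᵀ * R'))) := by
          simp only [mul_assoc]
      _ = R * (Q * (Qᵀ * R')) := by
          rw [diagonal_mul_diagonal,
            show (fun i => p i * (p i)⁻¹) = fun _ => (1:ℝ) from
              funext fun i => mul_inv_cancel₀ (hppos i).ne', diagonal_one, one_mul]
      _ = (R * (Q * Qᵀ)) * R' := by simp only [mul_assoc]
      _ = 1 := by rw [hQ1, mul_one, hRR']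
  have hAeq : A = M * Mᵀ := by
    have h1 : M * Mᵀ = R * (Q * diagonal γ * Qᵀ) * R := by
      rw [hMt, hM]
      calc R * Q * diagonal p * (diagonal p * (Qᵀ * R))
          = R * (Q * ((diagonal p * diagonal p) * (Qᵀ * R))) := by simp only [mul_assoc]
        _ = R * (Q * (diagonal γ * (Qᵀ * R))) := by rw [hpp]
        _ = R * (Q * diagonal γ * Qᵀ) * R := by simp only [mul_assoc]
    have h2 : R * (R' * A * R') * R = A := by
      calc R * (R' * A * R') * R = (R * R') * (A * (R' * R)) := by simp only [mul_assoc]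
        _ = A := by rw [hRR', hR'R, one_mul, mul_one]
    rw [h1, ← hGspec, hGdef]
    exact h2.symm
  have hMtM : Mᵀ * M = diagonal p * ((Qᵀ * B * Q) * diagonal p) := by
    rw [hMt, hM, ← hRR]
    calc diagonal p * (Qᵀ * R) * (R * Q * diagonal p)
        = diagonal p * (Qᵀ * ((R * R) * (Q * diagonal p))) := by simp only [mul_assoc]
      _ = diagonal p * ((Qᵀ * (R * R) * Q) * diagonal p) := by simp only [mul_assoc]
  calc N A = N (M * Mᵀ) := by rw [← hAeq]
    _ = N (Mᵀ * M) := N_mul_transpose_comm N ax3 hMM'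
    _ = N (diagonal p * ((Qᵀ * B * Q) * diagonal p)) := by rw [hMtM]
    _ ≤ N ((Qᵀ * B * Q) * diagonal p) := N_diagonal_mul_le N ax1 ax2 ax3 _ p hpabs
    _ ≤ N (Qᵀ * B * Q) := N_mul_diagonal_le N ax1 ax2 ax3 _ p hpabs
    _ = N B := ax3 Qᵀ Q B (by rw [transpose_transpose]; exact hQ2) hQ1



end CovAux

open Matrix in
set_option maxHeartbeats 1000000 in
theorem covariance_inv_le_and_norm_le (n : ℕ)
    (V S D : Matrix (Fin (2*n)) (Fin (2*n)) ℝ)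
    (hVpd : V.PosDef)
    (d : Fin (2*n) → ℝ) (hd : ∀ i, 1 ≤ d i)
    (hpair : ∀ i j : Fin (2*n), (i : ℕ) / 2 = (j : ℕ) / 2 → d i = d j)
    (hD : D = Matrix.diagonal d)
    (hS : S * stdSymplecticForm n * Sᵀ = stdSymplecticForm n)
    (hdec : V = S * D * Sᵀ) :
    (stdSymplecticForm n * V * (stdSymplecticForm n)ᵀ - V⁻¹).PosSemidef ∧
    ∀ N : Matrix (Fin (2*n)) (Fin (2*n)) ℝ → ℝ,
      (∀ A B, N (A + B) ≤ N A + N B) →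
      (∀ (c : ℝ) A, N (c • A) = |c| * N A) →
      (∀ (U W A : Matrix (Fin (2*n)) (Fin (2*n)) ℝ),
        U * Uᵀ = 1 → W * Wᵀ = 1 → N (U * A * W) = N A) →
      N V⁻¹ ≤ N V := by
  classical
  set Ω := stdSymplecticForm n with hΩdef
  have hΩ1 : Ω * Ωᵀ = 1 := CovAux.stdSymp_mul_transpose
  have hΩ2 : Ωᵀ * Ω = 1 := CovAux.stdSymp_transpose_mul
  have hd0 : ∀ i, d i ≠ 0 := fun i => by have := hd i; linarith
  set d' : Fin (2*n) → ℝ := fun i => (d i)⁻¹ with hd'def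
  set D' := Matrix.diagonal d' with hD'def
  have hpair' : ∀ i j : Fin (2*n), (i:ℕ)/2 = (j:ℕ)/2 → d' i = d' j := fun i j h => by
    show (d i)⁻¹ = (d j)⁻¹
    rw [hpair i j h]
  have hcomm' : Ω * D' = D' * Ω := CovAux.stdSymp_mul_diagonal d' hpair'
  have hDD' : D * D' = 1 := by
    rw [hD, hD'def, diagonal_mul_diagonal,
      show (fun i => d i * d' i) = fun _ => (1:ℝ) from
        funext fun i => mul_inv_cancel₀ (hd0 i), diagonal_one]
  set W := Ω * Sᵀ * Ωᵀ with hW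
  have hSW : S * W = 1 := by
    rw [hW]
    calc S * (Ω * Sᵀ * Ωᵀ) = (S * Ω * Sᵀ) * Ωᵀ := by simp only [mul_assoc]
      _ = 1 := by rw [hS, hΩ1]
  have hWS : W * S = 1 := mul_eq_one_comm.mp hSW
  have hWt : Wᵀ = Ω * S * Ωᵀ := by
    rw [hW, transpose_mul, transpose_mul, transpose_transpose, transpose_transpose,
      ← mul_assoc]
  have hStWt : Sᵀ * Wᵀ = 1 := by rw [← transpose_mul, hWS, transpose_one]
  have hVinv : V⁻¹ = Wᵀ * D' * W := by
    apply inv_eq_right_inv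
    rw [hdec]
    calc S * D * Sᵀ * (Wᵀ * D' * W)
        = S * (D * ((Sᵀ * Wᵀ) * (D' * W))) := by simp only [mul_assoc]
      _ = S * (D * (D' * W)) := by rw [hStWt, one_mul]
      _ = S * ((D * D') * W) := by simp only [mul_assoc]
      _ = 1 := by rw [hDD', one_mul, hSW]
  have hΩD'Ω : Ωᵀ * D' * Ω = D' := by
    calc Ωᵀ * D' * Ω = Ωᵀ * (Ω * D') := by rw [mul_assoc, ← hcomm']
      _ = D' := by rw [← mul_assoc, hΩ2, one_mul]
  have hVinv2 : V⁻¹ = Ω * (S * D' * Sᵀ) * Ωᵀ := by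
    rw [hVinv, hWt, hW]
    calc (Ω * S * Ωᵀ) * D' * (Ω * Sᵀ * Ωᵀ)
        = Ω * (S * ((Ωᵀ * D' * Ω) * (Sᵀ * Ωᵀ))) := by simp only [mul_assoc]
      _ = Ω * (S * (D' * (Sᵀ * Ωᵀ))) := by rw [hΩD'Ω]
      _ = Ω * (S * D' * Sᵀ) * Ωᵀ := by simp only [mul_assoc]
  have hdiag : Matrix.diagonal (fun i => d i - d' i) = D - D' := by
    rw [hD, hD'def]
    ext i j
    by_cases hij : i = j
    · subst hij; simp [Matrix.diagonal_apply_eq]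
    · simp [Matrix.diagonal_apply_ne _ hij]
  have key1 : Ω * V * Ωᵀ - V⁻¹
      = (Ω * S) * Matrix.diagonal (fun i => d i - d' i) * (Ω * S)ᵀ := by
    have expand : (Ω * S) * (D - D') * (Sᵀ * Ωᵀ)
        = Ω * (S * D * Sᵀ) * Ωᵀ - Ω * (S * D' * Sᵀ) * Ωᵀ := by
      rw [Matrix.mul_sub, Matrix.sub_mul]
      congr 1 <;> simp only [mul_assoc]
    rw [hVinv2, hdec, transpose_mul, hdiag, expand]
  have hdpsd : (Matrix.diagonal (fun i => d i - d' i)).PosSemidef := by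
    refine posSemidef_diagonal_iff.mpr fun i => ?_
    have h1 := hd i
    have h3 : (d i)⁻¹ * d i = 1 := inv_mul_cancel₀ (hd0 i)
    have : d' i = (d i)⁻¹ := rfl
    rw [this]
    nlinarith [sq_nonneg (d i - 1)]
  have part1 : (Ω * V * Ωᵀ - V⁻¹).PosSemidef := by
    have h := hdpsd.mul_mul_conjTranspose_same (Ω * S)
    rwa [conjTranspose_eq_transpose_of_trivial, ← key1] at h
  refine ⟨part1, ?_⟩
  intro N ax1 ax2 ax3
  have hVinvpd : (V⁻¹).PosDef := hVpd.inv
  have hBpd : (Ω * V * Ωᵀ).PosDef := by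
    have hu : IsUnit Ωᵀ := ⟨⟨Ωᵀ, Ω, hΩ2, hΩ1⟩, rfl⟩
    have h := CovAux.posDef_conj hVpd hu
    rwa [transpose_transpose] at h
  have hmono := CovAux.norm_mono hVinvpd hBpd part1 N ax1 ax2 ax3
  have hNB : N (Ω * V * Ωᵀ) = N V :=
    ax3 Ω Ωᵀ V hΩ1 (by rw [transpose_transpose]; exact hΩ2)
  rwa [hNB] at hmono
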